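/- For any Hopf algebra H over a field k, the subspace I₂(H) is a coideal of the tensor-product coalgebra H ⊗ H: the counit ε_{H⊗H} = ε ⊗ ε vanishes on I₂(H), and Δ_{H⊗H}(I₂(H)) ⊆ I₂(H) ⊗ (H ⊗ H) + (H ⊗ H) ⊗ I₂(H). (Hence the quotient H^[2] = (H ⊗ H)/I₂(H) carries a unique coalgebra structure making the projection H ⊗ H → H^[2] a coalgebra morphism.) -/

import Mathlib

open TensorProduct Coalgebra

/-- `I₂(H)`: the subspace of `H ⊗ H` spanned by the elements
`φ(x₂y₂)·(x₁ ⊗ y₁) − φ(x₁y₁)·(x₂ ⊗ y₂)` for `x, y ∈ H` and linear forms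
`φ : H → k`, where `H ⊗ H` carries the tensor-product coalgebra structure. -/
noncomputable def lazySubspace2 (k : Type*) [Field k] (H : Type*)
    [Ring H] [HopfAlgebra k H] : Submodule k (H ⊗[k] H) :=
  Submodule.span k {z : H ⊗[k] H | ∃ (x y : H) (φ : H →ₗ[k] k),
    z = (TensorProduct.rid k (H ⊗[k] H))
          (TensorProduct.map
            (LinearMap.id : H ⊗[k] H →ₗ[k] H ⊗[k] H)
            (φ ∘ₗ LinearMap.mul' k H)
            (Coalgebra.comul (R := k) (x ⊗ₜ[k] y)))
      - (TensorProduct.lid k (H ⊗[k] H))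
          (TensorProduct.map
            (φ ∘ₗ LinearMap.mul' k H)
            (LinearMap.id : H ⊗[k] H →ₗ[k] H ⊗[k] H)
            (Coalgebra.comul (R := k) (x ⊗ₜ[k] y)))}

section helpers
variable {k : Type*} [Field k] {H : Type*} [Ring H] [HopfAlgebra k H]

/-- The generator of `I₂(H)` attached to `x, y, φ`. -/
noncomputable def genElem (φ : H →ₗ[k] k) (x y : H) : H ⊗[k] H :=
  (TensorProduct.rid k (H ⊗[k] H))
        (TensorProduct.map (LinearMap.id : H ⊗[k] H →ₗ[k] H ⊗[k] H)
          (φ ∘ₗ LinearMap.mul' k H)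
          (Coalgebra.comul (R := k) (x ⊗ₜ[k] y)))
    - (TensorProduct.lid k (H ⊗[k] H))
        (TensorProduct.map (φ ∘ₗ LinearMap.mul' k H)
          (LinearMap.id : H ⊗[k] H →ₗ[k] H ⊗[k] H)
          (Coalgebra.comul (R := k) (x ⊗ₜ[k] y)))

lemma comul_tmul_repr (x y : H) (rx : Coalgebra.Repr k x (H × H)) (ry : Coalgebra.Repr k y (H × H)) :
    Coalgebra.comul (R := k) (x ⊗ₜ[k] y) =
    ∑ i ∈ rx.index, ∑ j ∈ ry.index,
      (rx.left i ⊗ₜ[k] ry.left j) ⊗ₜ[k] (rx.right i ⊗ₜ[k] ry.right j) := by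
  rw [TensorProduct.comul_def]
  simp only [LinearMap.coe_comp, LinearEquiv.coe_coe, Function.comp_apply, map_tmul,
    AlgebraTensorModule.map_tmul, ← rx.eq, ← ry.eq]
  rw [TensorProduct.sum_tmul]
  simp [TensorProduct.tmul_sum, map_sum]

lemma genElem_repr (φ : H →ₗ[k] k) (x y : H) (rx : Coalgebra.Repr k x (H × H))
    (ry : Coalgebra.Repr k y (H × H)) :
    genElem φ x y =
    ∑ i ∈ rx.index, ∑ j ∈ ry.index,
      (φ (rx.right i * ry.right j) • (rx.left i ⊗ₜ[k] ry.left j)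
       - φ (rx.left i * ry.left j) • (rx.right i ⊗ₜ[k] ry.right j)) := by
  rw [genElem, comul_tmul_repr x y rx ry]
  simp [map_sum, Finset.sum_sub_distrib, LinearMap.mul'_apply]

end helpers

section counit
variable {k : Type*} [Field k] {H : Type*} [Ring H] [HopfAlgebra k H]

lemma sum_counit_smul_right (x : H) (rx : Coalgebra.Repr k x (H × H)) :
    ∑ i ∈ rx.index, Coalgebra.counit (R := k) (rx.left i) • rx.right i = x := by
  have h := Coalgebra.sum_counit_tmul_eq rx
  have h2 := congrArg (TensorProduct.lid k H) h
  simp only [map_sum, TensorProduct.lid_tmul] at h2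
  simpa using h2

lemma sum_smul_counit_left (x : H) (rx : Coalgebra.Repr k x (H × H)) :
    ∑ i ∈ rx.index, Coalgebra.counit (R := k) (rx.right i) • rx.left i = x := by
  have h := Coalgebra.sum_tmul_counit_eq rx
  have h2 := congrArg (TensorProduct.rid k H) h
  simp only [map_sum, TensorProduct.rid_tmul] at h2
  simpa using h2

lemma counit_genElem (φ : H →ₗ[k] k) (x y : H) :
    Coalgebra.counit (R := k) (genElem φ x y) = 0 := by
  classical
  set rx := Coalgebra.Repr.arbitrary k x with hrx
  set ry := Coalgebra.Repr.arbitrary k y with hry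
  rw [genElem_repr φ x y rx ry]
  rw [TensorProduct.counit_def]
  simp only [map_sum, map_sub, map_smul, LinearMap.coe_comp, Function.comp_apply,
    TensorProduct.map_tmul, LinearMap.mul'_apply, smul_eq_mul, AlgebraTensorModule.map_tmul,
    AlgebraTensorModule.rid_tmul, LinearEquiv.coe_coe, mul_comm (counit (R := k) (ry.left _)),
    mul_comm (counit (R := k) (ry.right _))]
  have key1 : ∑ i ∈ rx.index, ∑ j ∈ ry.index,
      φ (rx.right i * ry.right j) *
        (Coalgebra.counit (R := k) (rx.left i) * Coalgebra.counit (R := k) (ry.left j))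
      = φ (x * y) := by
    calc ∑ i ∈ rx.index, ∑ j ∈ ry.index,
        φ (rx.right i * ry.right j) *
          (Coalgebra.counit (R := k) (rx.left i) * Coalgebra.counit (R := k) (ry.left j))
        = φ ((∑ i ∈ rx.index, Coalgebra.counit (R := k) (rx.left i) • rx.right i) *
             (∑ j ∈ ry.index, Coalgebra.counit (R := k) (ry.left j) • ry.right j)) := by
          rw [Finset.sum_mul_sum]
          simp only [map_sum, smul_mul_assoc, mul_smul_comm, map_smul, smul_eq_mul]
          refine Finset.sum_congr rfl fun i _ => Finset.sum_congr rfl fun j _ => by ring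
      _ = φ (x * y) := by rw [sum_counit_smul_right x rx, sum_counit_smul_right y ry]
  have key2 : ∑ i ∈ rx.index, ∑ j ∈ ry.index,
      φ (rx.left i * ry.left j) *
        (Coalgebra.counit (R := k) (rx.right i) * Coalgebra.counit (R := k) (ry.right j))
      = φ (x * y) := by
    calc ∑ i ∈ rx.index, ∑ j ∈ ry.index,
        φ (rx.left i * ry.left j) *
          (Coalgebra.counit (R := k) (rx.right i) * Coalgebra.counit (R := k) (ry.right j))
        = φ ((∑ i ∈ rx.index, Coalgebra.counit (R := k) (rx.right i) • rx.left i) *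
             (∑ j ∈ ry.index, Coalgebra.counit (R := k) (ry.right j) • ry.left j)) := by
          rw [Finset.sum_mul_sum]
          simp only [map_sum, smul_mul_assoc, mul_smul_comm, map_smul, smul_eq_mul]
          refine Finset.sum_congr rfl fun i _ => Finset.sum_congr rfl fun j _ => by ring
      _ = φ (x * y) := by rw [sum_smul_counit_left x rx, sum_smul_counit_left y ry]
  simp only [Finset.sum_sub_distrib]
  rw [key1, key2, sub_self]

end counit

section shuffles
variable (k : Type*) [Field k] (H : Type*) [Ring H] [HopfAlgebra k H]

/-- `(x₁⊗(x₂⊗x₃))⊗(y₁⊗(y₂⊗y₃)) ↦ (x₁⊗y₁)⊗((x₂⊗y₂)⊗(x₃⊗y₃))`. -/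
noncomputable def shuffleC :
    ((H ⊗[k] (H ⊗[k] H)) ⊗[k] (H ⊗[k] (H ⊗[k] H))) →ₗ[k]
      ((H ⊗[k] H) ⊗[k] ((H ⊗[k] H) ⊗[k] (H ⊗[k] H))) :=
  (TensorProduct.map (LinearMap.id : H ⊗[k] H →ₗ[k] H ⊗[k] H)
      (tensorTensorTensorComm k H H H H).toLinearMap) ∘ₗ
    (tensorTensorTensorComm k H (H ⊗[k] H) H (H ⊗[k] H)).toLinearMap

@[simp] lemma shuffleC_tmul (x₁ x₂ x₃ y₁ y₂ y₃ : H) :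
    shuffleC k H ((x₁ ⊗ₜ[k] (x₂ ⊗ₜ[k] x₃)) ⊗ₜ[k] (y₁ ⊗ₜ[k] (y₂ ⊗ₜ[k] y₃)))
      = (x₁ ⊗ₜ[k] y₁) ⊗ₜ[k] ((x₂ ⊗ₜ[k] y₂) ⊗ₜ[k] (x₃ ⊗ₜ[k] y₃)) := by
  simp [shuffleC]

variable {k H}

noncomputable def shuffleA (φ : H →ₗ[k] k) :
    ((H ⊗[k] (H ⊗[k] H)) ⊗[k] (H ⊗[k] (H ⊗[k] H))) →ₗ[k] ((H ⊗[k] H) ⊗[k] (H ⊗[k] H)) :=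
  (TensorProduct.map (LinearMap.id : H ⊗[k] H →ₗ[k] H ⊗[k] H)
      ((TensorProduct.lid k (H ⊗[k] H)).toLinearMap ∘ₗ
        TensorProduct.map (φ ∘ₗ LinearMap.mul' k H)
          (LinearMap.id : H ⊗[k] H →ₗ[k] H ⊗[k] H))) ∘ₗ shuffleC k H

noncomputable def shuffleB (φ : H →ₗ[k] k) :
    ((H ⊗[k] (H ⊗[k] H)) ⊗[k] (H ⊗[k] (H ⊗[k] H))) →ₗ[k] ((H ⊗[k] H) ⊗[k] (H ⊗[k] H)) :=
  (TensorProduct.map (LinearMap.id : H ⊗[k] H →ₗ[k] H ⊗[k] H)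
      ((TensorProduct.rid k (H ⊗[k] H)).toLinearMap ∘ₗ
        TensorProduct.map (LinearMap.id : H ⊗[k] H →ₗ[k] H ⊗[k] H)
          (φ ∘ₗ LinearMap.mul' k H))) ∘ₗ shuffleC k H

noncomputable def shuffleD (φ : H →ₗ[k] k) :
    ((H ⊗[k] (H ⊗[k] H)) ⊗[k] (H ⊗[k] (H ⊗[k] H))) →ₗ[k] ((H ⊗[k] H) ⊗[k] (H ⊗[k] H)) :=
  (TensorProduct.lid k ((H ⊗[k] H) ⊗[k] (H ⊗[k] H))).toLinearMap ∘ₗ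
    (TensorProduct.map (φ ∘ₗ LinearMap.mul' k H)
      (LinearMap.id : (H ⊗[k] H) ⊗[k] (H ⊗[k] H) →ₗ[k] (H ⊗[k] H) ⊗[k] (H ⊗[k] H))) ∘ₗ
    shuffleC k H

@[simp] lemma shuffleA_tmul (φ : H →ₗ[k] k) (x₁ x₂ x₃ y₁ y₂ y₃ : H) :
    shuffleA φ ((x₁ ⊗ₜ[k] (x₂ ⊗ₜ[k] x₃)) ⊗ₜ[k] (y₁ ⊗ₜ[k] (y₂ ⊗ₜ[k] y₃)))
      = φ (x₂ * y₂) • ((x₁ ⊗ₜ[k] y₁) ⊗ₜ[k] (x₃ ⊗ₜ[k] y₃)) := by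
  simp [shuffleA, LinearMap.mul'_apply, TensorProduct.tmul_smul]

@[simp] lemma shuffleB_tmul (φ : H →ₗ[k] k) (x₁ x₂ x₃ y₁ y₂ y₃ : H) :
    shuffleB φ ((x₁ ⊗ₜ[k] (x₂ ⊗ₜ[k] x₃)) ⊗ₜ[k] (y₁ ⊗ₜ[k] (y₂ ⊗ₜ[k] y₃)))
      = φ (x₃ * y₃) • ((x₁ ⊗ₜ[k] y₁) ⊗ₜ[k] (x₂ ⊗ₜ[k] y₂)) := by
  simp [shuffleB, LinearMap.mul'_apply, TensorProduct.tmul_smul]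

@[simp] lemma shuffleD_tmul (φ : H →ₗ[k] k) (x₁ x₂ x₃ y₁ y₂ y₃ : H) :
    shuffleD φ ((x₁ ⊗ₜ[k] (x₂ ⊗ₜ[k] x₃)) ⊗ₜ[k] (y₁ ⊗ₜ[k] (y₂ ⊗ₜ[k] y₃)))
      = φ (x₁ * y₁) • ((x₂ ⊗ₜ[k] y₂) ⊗ₜ[k] (x₃ ⊗ₜ[k] y₃)) := by
  simp [shuffleD, LinearMap.mul'_apply]

end shuffles

section main
variable {k : Type*} [Field k] {H : Type*} [Ring H] [HopfAlgebra k H]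

set_option maxHeartbeats 2000000 in
lemma comul_genElem_eq (φ : H →ₗ[k] k) (x y : H) (rx : Coalgebra.Repr k x (H × H))
    (ry : Coalgebra.Repr k y (H × H)) :
    Coalgebra.comul (R := k) (genElem φ x y)
      = (∑ i ∈ rx.index, ∑ j ∈ ry.index,
           genElem φ (rx.left i) (ry.left j) ⊗ₜ[k] (rx.right i ⊗ₜ[k] ry.right j))
        + (∑ i ∈ rx.index, ∑ j ∈ ry.index,
           (rx.left i ⊗ₜ[k] ry.left j) ⊗ₜ[k] genElem φ (rx.right i) (ry.right j)) := by
  classical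
  set ra : ∀ i, Coalgebra.Repr k (rx.left i) (H × H) := fun i => Coalgebra.Repr.arbitrary k _ with hra
  set rb : ∀ i, Coalgebra.Repr k (rx.right i) (H × H) := fun i => Coalgebra.Repr.arbitrary k _ with hrb
  set rc : ∀ j, Coalgebra.Repr k (ry.left j) (H × H) := fun j => Coalgebra.Repr.arbitrary k _ with hrc
  set rd : ∀ j, Coalgebra.Repr k (ry.right j) (H × H) := fun j => Coalgebra.Repr.arbitrary k _ with hrd
  have hX := Coalgebra.sum_tmul_tmul_eq rx ra rb
  have hY := Coalgebra.sum_tmul_tmul_eq ry rc rd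
  -- generic two-way evaluation of a linear map on the coassociativity identity
  have hF : ∀ (F : ((H ⊗[k] (H ⊗[k] H)) ⊗[k] (H ⊗[k] (H ⊗[k] H))) →ₗ[k]
      ((H ⊗[k] H) ⊗[k] (H ⊗[k] H))),
      (∑ i ∈ rx.index, ∑ j ∈ ry.index, ∑ s ∈ (ra i).index, ∑ u ∈ (rc j).index,
        F (((ra i).left s ⊗ₜ[k] ((ra i).right s ⊗ₜ[k] rx.right i)) ⊗ₜ[k]
           ((rc j).left u ⊗ₜ[k] ((rc j).right u ⊗ₜ[k] ry.right j))))
      = (∑ i ∈ rx.index, ∑ j ∈ ry.index, ∑ s ∈ (rb i).index, ∑ u ∈ (rd j).index,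
        F ((rx.left i ⊗ₜ[k] ((rb i).left s ⊗ₜ[k] (rb i).right s)) ⊗ₜ[k]
           (ry.left j ⊗ₜ[k] ((rd j).left u ⊗ₜ[k] (rd j).right u)))) := by
    intro F
    have e1 : F ((∑ i ∈ rx.index, ∑ s ∈ (ra i).index,
          (ra i).left s ⊗ₜ[k] ((ra i).right s ⊗ₜ[k] rx.right i)) ⊗ₜ[k]
        (∑ j ∈ ry.index, ∑ u ∈ (rc j).index,
          (rc j).left u ⊗ₜ[k] ((rc j).right u ⊗ₜ[k] ry.right j)))
        = ∑ i ∈ rx.index, ∑ j ∈ ry.index, ∑ s ∈ (ra i).index, ∑ u ∈ (rc j).index,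
          F (((ra i).left s ⊗ₜ[k] ((ra i).right s ⊗ₜ[k] rx.right i)) ⊗ₜ[k]
             ((rc j).left u ⊗ₜ[k] ((rc j).right u ⊗ₜ[k] ry.right j))) := by
      rw [TensorProduct.sum_tmul]
      simp only [TensorProduct.sum_tmul, TensorProduct.tmul_sum, map_sum]
      exact Finset.sum_congr rfl fun i _ => Finset.sum_congr rfl fun j _ => Finset.sum_comm
    have e2 : F ((∑ i ∈ rx.index, ∑ s ∈ (rb i).index,
          rx.left i ⊗ₜ[k] ((rb i).left s ⊗ₜ[k] (rb i).right s)) ⊗ₜ[k]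
        (∑ j ∈ ry.index, ∑ u ∈ (rd j).index,
          ry.left j ⊗ₜ[k] ((rd j).left u ⊗ₜ[k] (rd j).right u)))
        = ∑ i ∈ rx.index, ∑ j ∈ ry.index, ∑ s ∈ (rb i).index, ∑ u ∈ (rd j).index,
          F ((rx.left i ⊗ₜ[k] ((rb i).left s ⊗ₜ[k] (rb i).right s)) ⊗ₜ[k]
             (ry.left j ⊗ₜ[k] ((rd j).left u ⊗ₜ[k] (rd j).right u))) := by
      rw [TensorProduct.sum_tmul]
      simp only [TensorProduct.sum_tmul, TensorProduct.tmul_sum, map_sum]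
      exact Finset.sum_congr rfl fun i _ => Finset.sum_congr rfl fun j _ => Finset.sum_comm
    rw [← e1, ← e2, hX, hY]
  -- expand `comul (genElem φ x y)`
  have hA : Coalgebra.comul (R := k) (genElem φ x y)
      = (∑ i ∈ rx.index, ∑ j ∈ ry.index, ∑ s ∈ (ra i).index, ∑ u ∈ (rc j).index,
          φ (rx.right i * ry.right j) •
            (((ra i).left s ⊗ₜ[k] (rc j).left u) ⊗ₜ[k] ((ra i).right s ⊗ₜ[k] (rc j).right u)))
        - (∑ i ∈ rx.index, ∑ j ∈ ry.index, ∑ s ∈ (rb i).index, ∑ u ∈ (rd j).index,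
          φ (rx.left i * ry.left j) •
            (((rb i).left s ⊗ₜ[k] (rd j).left u) ⊗ₜ[k] ((rb i).right s ⊗ₜ[k] (rd j).right u))) := by
    rw [genElem_repr φ x y rx ry]
    simp only [map_sum, map_sub, map_smul, ← Finset.sum_sub_distrib]
    refine Finset.sum_congr rfl fun i _ => Finset.sum_congr rfl fun j _ => ?_
    rw [comul_tmul_repr _ _ (ra i) (rc j), comul_tmul_repr _ _ (rb i) (rd j)]
    simp only [Finset.smul_sum]
  -- expand `P`
  have hP : (∑ i ∈ rx.index, ∑ j ∈ ry.index,
        genElem φ (rx.left i) (ry.left j) ⊗ₜ[k] (rx.right i ⊗ₜ[k] ry.right j))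
      = (∑ i ∈ rx.index, ∑ j ∈ ry.index, ∑ s ∈ (ra i).index, ∑ u ∈ (rc j).index,
          φ ((ra i).right s * (rc j).right u) •
            (((ra i).left s ⊗ₜ[k] (rc j).left u) ⊗ₜ[k] (rx.right i ⊗ₜ[k] ry.right j)))
        - (∑ i ∈ rx.index, ∑ j ∈ ry.index, ∑ s ∈ (ra i).index, ∑ u ∈ (rc j).index,
          φ ((ra i).left s * (rc j).left u) •
            (((ra i).right s ⊗ₜ[k] (rc j).right u) ⊗ₜ[k] (rx.right i ⊗ₜ[k] ry.right j))) := by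
    simp only [← Finset.sum_sub_distrib]
    refine Finset.sum_congr rfl fun i _ => Finset.sum_congr rfl fun j _ => ?_
    rw [genElem_repr φ _ _ (ra i) (rc j)]
    simp only [TensorProduct.sum_tmul, TensorProduct.sub_tmul, TensorProduct.smul_tmul',
      Finset.sum_sub_distrib]
  -- expand `Q`
  have hQ : (∑ i ∈ rx.index, ∑ j ∈ ry.index,
        (rx.left i ⊗ₜ[k] ry.left j) ⊗ₜ[k] genElem φ (rx.right i) (ry.right j))
      = (∑ i ∈ rx.index, ∑ j ∈ ry.index, ∑ s ∈ (rb i).index, ∑ u ∈ (rd j).index,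
          φ ((rb i).right s * (rd j).right u) •
            ((rx.left i ⊗ₜ[k] ry.left j) ⊗ₜ[k] ((rb i).left s ⊗ₜ[k] (rd j).left u)))
        - (∑ i ∈ rx.index, ∑ j ∈ ry.index, ∑ s ∈ (rb i).index, ∑ u ∈ (rd j).index,
          φ ((rb i).left s * (rd j).left u) •
            ((rx.left i ⊗ₜ[k] ry.left j) ⊗ₜ[k] ((rb i).right s ⊗ₜ[k] (rd j).right u))) := by
    simp only [← Finset.sum_sub_distrib]
    refine Finset.sum_congr rfl fun i _ => Finset.sum_congr rfl fun j _ => ?_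
    rw [genElem_repr φ _ _ (rb i) (rd j)]
    simp only [TensorProduct.tmul_sum, TensorProduct.tmul_sub, TensorProduct.tmul_smul,
      Finset.sum_sub_distrib]
  -- the three exchange identities
  have h1 := hF (shuffleB φ)
  simp only [shuffleB_tmul] at h1
  have h2 := hF (shuffleD φ)
  simp only [shuffleD_tmul] at h2
  have h3 := hF (shuffleA φ)
  simp only [shuffleA_tmul] at h3
  rw [hA, hP, hQ, h1, h2, h3]
  abel

end main

section final
variable {k : Type*} [Field k] {H : Type*} [Ring H] [HopfAlgebra k H]

lemma genElem_mem (φ : H →ₗ[k] k) (x y : H) : genElem φ x y ∈ lazySubspace2 k H :=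
  Submodule.subset_span ⟨x, y, φ, rfl⟩

theorem lazySubspace2_isCoideal' (z : H ⊗[k] H) (hz : z ∈ lazySubspace2 k H) :
    Coalgebra.counit (R := k) z = 0 ∧
      Coalgebra.comul (R := k) z ∈
        LinearMap.range (TensorProduct.map (lazySubspace2 k H).subtype
          (LinearMap.id : H ⊗[k] H →ₗ[k] H ⊗[k] H)) ⊔
        LinearMap.range (TensorProduct.map
          (LinearMap.id : H ⊗[k] H →ₗ[k] H ⊗[k] H)
          (lazySubspace2 k H).subtype) := by
  classical
  induction hz using Submodule.span_induction with
  | mem w hw =>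
    obtain ⟨x, y, φ, rfl⟩ := hw
    refine ⟨counit_genElem φ x y, ?_⟩
    set rx := Coalgebra.Repr.arbitrary k x
    set ry := Coalgebra.Repr.arbitrary k y
    rw [show ((TensorProduct.rid k (H ⊗[k] H))
          (TensorProduct.map (LinearMap.id : H ⊗[k] H →ₗ[k] H ⊗[k] H)
            (φ ∘ₗ LinearMap.mul' k H) (Coalgebra.comul (R := k) (x ⊗ₜ[k] y)))
      - (TensorProduct.lid k (H ⊗[k] H))
          (TensorProduct.map (φ ∘ₗ LinearMap.mul' k H)
            (LinearMap.id : H ⊗[k] H →ₗ[k] H ⊗[k] H)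
            (Coalgebra.comul (R := k) (x ⊗ₜ[k] y)))) = genElem φ x y from rfl]
    rw [comul_genElem_eq φ x y rx ry]
    refine Submodule.add_mem_sup ?_ ?_
    · refine ⟨∑ i ∈ rx.index, ∑ j ∈ ry.index,
        (⟨genElem φ (rx.left i) (ry.left j), genElem_mem _ _ _⟩ : lazySubspace2 k H)
          ⊗ₜ[k] (rx.right i ⊗ₜ[k] ry.right j), ?_⟩
      simp [map_sum]
    · refine ⟨∑ i ∈ rx.index, ∑ j ∈ ry.index,
        (rx.left i ⊗ₜ[k] ry.left j) ⊗ₜ[k]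
          (⟨genElem φ (rx.right i) (ry.right j), genElem_mem _ _ _⟩ : lazySubspace2 k H), ?_⟩
      simp [map_sum]
  | zero => simp
  | add a b _ _ ha hb =>
    exact ⟨by rw [map_add, ha.1, hb.1, add_zero],
      by rw [map_add]; exact Submodule.add_mem _ ha.2 hb.2⟩
  | smul c a _ ha =>
    exact ⟨by rw [map_smul, ha.1, smul_zero],
      by rw [map_smul]; exact Submodule.smul_mem _ c ha.2⟩

end final

/-- For any Hopf algebra `H`, the subspace `I₂(H)` is a coideal
of the tensor-product coalgebra `H ⊗ H`: the counit `ε ⊗ ε` vanishes on it and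
`Δ_{H⊗H}(I₂(H)) ⊆ I₂(H) ⊗ (H ⊗ H) + (H ⊗ H) ⊗ I₂(H)`. -/
theorem lazySubspace2_isCoideal (k : Type*) [Field k] (H : Type*)
    [Ring H] [HopfAlgebra k H] :
    ∀ z ∈ lazySubspace2 k H,
      Coalgebra.counit (R := k) z = 0 ∧
      Coalgebra.comul (R := k) z ∈
        LinearMap.range (TensorProduct.map (lazySubspace2 k H).subtype
          (LinearMap.id : H ⊗[k] H →ₗ[k] H ⊗[k] H)) ⊔
        LinearMap.range (TensorProduct.map
          (LinearMap.id : H ⊗[k] H →ₗ[k] H ⊗[k] H)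
          (lazySubspace2 k H).subtype) :=
  fun z hz => lazySubspace2_isCoideal' z hz
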